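/- arXiv:2509.01698 — 3 statements merged into one kernel-verified Lean document; each statement's English description precedes it below -/
import Mathlib

section
/- Let G be a connected (bull, claw)-free finite graph. If G contains an odd antihole as an induced subgraph, then α(G) = 2. -/
open SimpleGraph Finset

/-- The cycle graph on `Fin p` (for `p ≥ 3` this is the cycle `C_p`). -/
def cycleG (p : ℕ) [NeZero p] : SimpleGraph (Fin p) where
  Adj i j := i ≠ j ∧ (i + 1 = j ∨ j + 1 = i)
  symm := by
    constructor
    rintro i j ⟨h, h'⟩
    exact ⟨h.symm, h'.symm⟩
  loopless := by
    constructor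
    rintro i ⟨h, _⟩
    exact h rfl

/-- The clique expansion `C_p[k 0, …, k (p-1)]` of the cycle `C_p`:
vertices of the cycle are replaced by cliques of the prescribed sizes, and
all edges are added between cyclically consecutive cliques. -/
def cliqueExpansion (p : ℕ) [NeZero p] (k : Fin p → ℕ) : SimpleGraph (Σ i : Fin p, Fin (k i)) where
  Adj a b := a ≠ b ∧ (a.1 = b.1 ∨ a.1 + 1 = b.1 ∨ b.1 + 1 = a.1)
  symm := by
    constructor
    rintro a b ⟨h, h'⟩
    refine ⟨h.symm, ?_⟩
    rcases h' with h' | h' | h'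
    · exact Or.inl h'.symm
    · exact Or.inr (Or.inr h')
    · exact Or.inr (Or.inl h')
  loopless := by
    constructor
    rintro a ⟨h, _⟩
    exact h rfl

/-- The join `G ⊕ H` of two graphs: disjoint union plus all edges in between. -/
def joinG {α β : Type*} (G : SimpleGraph α) (H : SimpleGraph β) : SimpleGraph (α ⊕ β) where
  Adj x y :=
    match x, y with
    | Sum.inl a, Sum.inl b => G.Adj a b
    | Sum.inr a, Sum.inr b => H.Adj a b
    | _, _ => True
  symm := by
    constructor
    rintro (a | a) (b | b) h
    · exact G.adj_symm h
    · trivial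
    · trivial
    · exact H.adj_symm h
  loopless := by
    constructor
    rintro (a | a) h
    · exact G.loopless.irrefl a h
    · exact H.loopless.irrefl a h

/-- The bull: a triangle with two pendant edges. -/
def bull : SimpleGraph (Fin 5) :=
  SimpleGraph.fromRel (fun a b =>
    (a = 0 ∧ b = 1) ∨ (a = 1 ∧ b = 2) ∨ (a = 2 ∧ b = 3) ∨ (a = 3 ∧ b = 4) ∨ (a = 1 ∧ b = 3))

/-- The claw `K_{1,3}`. -/
def claw : SimpleGraph (Fin 4) :=
  SimpleGraph.fromRel (fun a b => a = 0 ∧ b ≠ 0)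

/-- The chair: the claw with one edge subdivided once. -/
def chair : SimpleGraph (Fin 5) :=
  SimpleGraph.fromRel (fun a b =>
    (a = 0 ∧ b = 1) ∨ (a = 0 ∧ b = 2) ∨ (a = 0 ∧ b = 3) ∨ (a = 3 ∧ b = 4))

/-- `G` contains `H` as a (not necessarily induced) subgraph. -/
def ContainsSub {V W : Type*} (G : SimpleGraph V) (H : SimpleGraph W) : Prop :=
  ∃ f : H →g G, Function.Injective f

/-- The independence number of a finite graph. -/
noncomputable def indepNum {V : Type*} [Fintype V] (G : SimpleGraph V) : ℕ :=
  sSup {n | ∃ s : Finset V, s.card = n ∧ ∀ a ∈ s, ∀ b ∈ s, a ≠ b → ¬ G.Adj a b}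

/-- Clique sizes of the spindle graph `M_{3i+1} = C_{2i+1}[2,1,2,1,…,2,1,1]`. -/
def spindleKs (i : ℕ) : Fin (2 * i + 1) → ℕ :=
  fun j => if j.val % 2 = 0 ∧ j.val < 2 * i then 2 else 1

/-- Clique sizes `[2,…,2,1,3,1,3,1,…,3,1]`: `a` copies of `2`, then a `1`,
then alternating `3,1`-pairs up to length `p`. -/
def patternKs (p a : ℕ) : Fin p → ℕ :=
  fun j => if j.val < a then 2 else if (j.val - a) % 2 = 0 then 1 else 3

open Fin.NatCast Fin.CommRing

section BullClawAux

variable {V : Type*} {G : SimpleGraph V}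

lemma BCF.addNatNe {p : ℕ} [NeZero p] {n : ℕ} (h1 : 0 < n) (h2 : n < p) (i : Fin p) :
    i + (n : Fin p) ≠ i := by
  intro h
  have h0 : (n : Fin p) = 0 := by
    have h' : i + (n : Fin p) = i + 0 := by rw [add_zero]; exact h
    exact add_left_cancel h'
  have := congrArg Fin.val h0
  rw [Fin.val_cast_of_lt h2] at this
  simp at this
  omega

lemma BCF.claw_of (hclaw : ¬ Nonempty (claw ↪g G))
    (c l1 l2 l3 : V) (h1 : G.Adj c l1) (h2 : G.Adj c l2) (h3 : G.Adj c l3)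
    (n12 : ¬G.Adj l1 l2) (n13 : ¬G.Adj l1 l3) (n23 : ¬G.Adj l2 l3)
    (d12 : l1 ≠ l2) (d13 : l1 ≠ l3) (d23 : l2 ≠ l3) : False := by
  apply hclaw
  have dc1 : c ≠ l1 := G.ne_of_adj h1
  have dc2 : c ≠ l2 := G.ne_of_adj h2
  have dc3 : c ≠ l3 := G.ne_of_adj h3
  refine ⟨⟨⟨![c,l1,l2,l3], ?_⟩, ?_⟩⟩
  · intro a b hab
    fin_cases a <;> fin_cases b <;> simp_all
  · intro a b
    fin_cases a <;> fin_cases b <;>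
      simp [claw, Matrix.cons_val_zero, Matrix.cons_val_one] <;>
      first
        | exact h1 | exact h2 | exact h3
        | exact h1.symm | exact h2.symm | exact h3.symm
        | exact n12 | exact n13 | exact n23
        | exact fun h => n12 h.symm | exact fun h => n13 h.symm | exact fun h => n23 h.symm

lemma BCF.bull_of (hbull : ¬ Nonempty (bull ↪g G))
    (t1 t2 t3 q1 q2 : V)
    (h12 : G.Adj t1 t2) (h13 : G.Adj t1 t3) (h23 : G.Adj t2 t3)
    (hq1 : G.Adj q1 t1) (hq2 : G.Adj q2 t2)
    (n1 : ¬ G.Adj q1 t2) (n2 : ¬ G.Adj q1 t3) (n3 : ¬ G.Adj q2 t1)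
    (n4 : ¬ G.Adj q2 t3) (n5 : ¬ G.Adj q1 q2) : False := by
  apply hbull
  have e1 : q1 ≠ t1 := G.ne_of_adj hq1
  have e2 : q1 ≠ t2 := fun h => n2 (h ▸ h23)
  have e3 : q1 ≠ t3 := fun h => n1 (h ▸ h23.symm)
  have e4 : q1 ≠ q2 := fun h => n3 (h ▸ hq1)
  have e5 : t1 ≠ t2 := G.ne_of_adj h12
  have e6 : t1 ≠ t3 := G.ne_of_adj h13
  have e7 : t2 ≠ t3 := G.ne_of_adj h23
  have e8 : q2 ≠ t1 := fun h => n4 (h ▸ h13)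
  have e9 : q2 ≠ t2 := G.ne_of_adj hq2
  have e10 : q2 ≠ t3 := fun h => n3 (h ▸ h13.symm)
  refine ⟨⟨⟨![q1, t1, t3, t2, q2], ?_⟩, ?_⟩⟩
  · intro a b hab
    fin_cases a <;> fin_cases b <;> simp_all
  · intro a b
    fin_cases a <;> fin_cases b <;>
      simp [bull, Matrix.cons_val_zero, Matrix.cons_val_one] <;>
      first
        | exact hq1 | exact hq1.symm | exact hq2 | exact hq2.symm
        | exact h12 | exact h12.symm | exact h13 | exact h13.symm
        | exact h23 | exact h23.symm
        | exact n1 | exact fun h => n1 h.symm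
        | exact n2 | exact fun h => n2 h.symm
        | exact n3 | exact fun h => n3 h.symm
        | exact n4 | exact fun h => n4 h.symm
        | exact n5 | exact fun h => n5 h.symm

lemma BCF.flipFalse {p : ℕ} [NeZero p] (hodd : Odd p) (f : Fin p → Prop)
    (hflip : ∀ j, f (j+1) ↔ ¬ f j) : False := by
  have key : ∀ n : ℕ, ∀ j, f (j + (n:Fin p)) ↔ (if Even n then f j else ¬ f j) := by
    intro n
    induction n with
    | zero => intro j; simp
    | succ m ih =>
      intro j
      have hc : ((m+1 : ℕ) : Fin p) = (m : Fin p) + 1 := by push_cast; ring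
      rw [hc, ← add_assoc, hflip, ih j]
      rcases Nat.even_or_odd m with h | h
      · simp [h, Nat.even_add_one, h]
      · simp [Nat.not_even_iff_odd.2 h, Nat.even_add_one, Nat.not_even_iff_odd.2 h]
  have h := key p 0
  rw [Fin.natCast_self, add_zero, if_neg (Nat.not_even_iff_odd.2 hodd)] at h
  exact (not_iff_self h.symm).elim

lemma BCF.adjIff {p : ℕ} [NeZero p] (e : (cycleG p)ᶜ ↪g G) :
    ∀ i j, G.Adj (e i) (e j) ↔ (i ≠ j ∧ i + 1 ≠ j ∧ j + 1 ≠ i) := by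
  intro i j
  rw [e.map_adj_iff, compl_adj]
  unfold cycleG
  simp only [ne_eq]
  tauto

end BullClawAux

section BullClawAux2

variable {V : Type*} {G : SimpleGraph V} {p : ℕ} [NeZero p]

lemma BCF.na (hp5 : 5 ≤ p) (i : Fin p) :
    (i+1 ≠ i) ∧ (i+1+1 ≠ i) ∧ (i+1+1+1 ≠ i) ∧ (i+1+1+1+1 ≠ i) := by
  refine ⟨?_, ?_, ?_, ?_⟩ <;> intro h
  · exact BCF.addNatNe (n := 1) (by norm_num) (by omega) i (by push_cast; linear_combination h)
  · exact BCF.addNatNe (n := 2) (by norm_num) (by omega) i (by push_cast; linear_combination h)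
  · exact BCF.addNatNe (n := 3) (by norm_num) (by omega) i (by push_cast; linear_combination h)
  · exact BCF.addNatNe (n := 4) (by norm_num) (by omega) i (by push_cast; linear_combination h)

lemma BCF.ncons (e : (cycleG p)ᶜ ↪g G) (i : Fin p) : ¬ G.Adj (e i) (e (i+1)) :=
  fun h => ((BCF.adjIff e i _).1 h).2.1 rfl

lemma BCF.ncons' (e : (cycleG p)ᶜ ↪g G) (i : Fin p) : ¬ G.Adj (e (i+1)) (e i) :=
  fun h => BCF.ncons e i h.symm

lemma BCF.noMedge (hp5 : 5 ≤ p)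
    (hbull : ¬ Nonempty (bull ↪g G)) (hclaw : ¬ Nonempty (claw ↪g G))
    (e : (cycleG p)ᶜ ↪g G)
    (u : V) (hu : ∀ k, u ≠ e k) {i : Fin p} (hi : G.Adj u (e i))
    {j : Fin p} (hj : ¬ G.Adj u (e j)) (hj1 : ¬ G.Adj u (e (j+1))) : False := by
  have hadj := BCF.adjIff e
  have na1 : ∀ i : Fin p, i+1 ≠ i := fun i => (BCF.na hp5 i).1
  have na2 : ∀ i : Fin p, i+1+1 ≠ i := fun i => (BCF.na hp5 i).2.1
  have na3 : ∀ i : Fin p, i+1+1+1 ≠ i := fun i => (BCF.na hp5 i).2.2.1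
  have na4 : ∀ i : Fin p, i+1+1+1+1 ≠ i := fun i => (BCF.na hp5 i).2.2.2
  have hstep : ∀ j' i' : Fin p, ¬G.Adj u (e j') → ¬G.Adj u (e (j'+1)) → G.Adj u (e i') →
      i' + 1 = j' ∨ i' = j' + 1 + 1 := by
    intro j' i' hja hjb hia
    by_contra hcon
    push_neg at hcon
    obtain ⟨c1, c2⟩ := hcon
    have d1 : i' ≠ j' := fun h => hja (h ▸ hia)
    have d2 : i' ≠ j' + 1 := fun h => hjb (h ▸ hia)
    exact BCF.claw_of hclaw (e i') u (e j') (e (j'+1))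
      hia.symm
      ((hadj i' j').2 ⟨d1, c1, fun h => d2 h.symm⟩)
      ((hadj i' (j'+1)).2 ⟨d2, fun h => d1 (add_right_cancel h), fun h => c2 h.symm⟩)
      hja hjb (BCF.ncons e j')
      (hu j') (hu (j'+1)) (fun h => na1 j' (e.injective h).symm)
  have bull4 : ∀ k : Fin p, G.Adj u (e k) → ¬G.Adj u (e (k+1)) → ¬G.Adj u (e (k+1+1)) →
      G.Adj u (e (k+1+1+1)) → False := by
    intro k b1 b2 b3 b4
    refine BCF.bull_of hbull (e k) (e (k+1+1+1)) u (e (k+1+1)) (e (k+1))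
      ((hadj _ _).2 ⟨fun h => na3 k h.symm, fun h => na2 (k+1) h.symm, na4 k⟩)
      b1.symm b4.symm
      ((hadj _ _).2 ⟨na2 k, na3 k, fun h => na1 (k+1) h.symm⟩)
      ((hadj _ _).2 ⟨fun h => na2 (k+1) h.symm, fun h => na1 (k+1+1) h.symm, na3 (k+1)⟩)
      (BCF.ncons e (k+1+1)) (fun h => b3 h.symm) (BCF.ncons' e k)
      (fun h => b2 h.symm) (BCF.ncons' e (k+1))
  rcases hstep j i hj hj1 hi with hc | hc
  · subst hc
    by_cases hb : G.Adj u (e (i+1+1+1))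
    · exact bull4 i hi hj hj1 hb
    · rcases hstep (i+1+1) i hj1 hb hi with h | h
      · exact na1 (i+1) h.symm
      · exact na4 i h.symm
  · subst hc
    have hjj : j - 1 + 1 = j := sub_add_cancel j 1
    by_cases hb : G.Adj u (e (j-1))
    · refine bull4 (j-1) hb ?_ ?_ ?_
      · rw [hjj]; exact hj
      · rw [hjj]; exact hj1
      · rw [hjj]; exact hi
    · have hstep2 := hstep (j-1) (j+1+1) hb (by rw [hjj]; exact hj) hi
      rcases hstep2 with h | h
      · apply na4 j
        have := congrArg (· + 1) h
        simpa [hjj] using this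
      · rw [hjj] at h
        exact na1 (j+1) h

end BullClawAux2

section BullClawAux3

variable {V : Type*} {G : SimpleGraph V} {p : ℕ} [NeZero p]

lemma BCF.hasNbr (hp5 : 5 ≤ p) (hodd : Odd p)
    (hbull : ¬ Nonempty (bull ↪g G)) (hclaw : ¬ Nonempty (claw ↪g G))
    (hconn : G.Connected) (e : (cycleG p)ᶜ ↪g G)
    (u : V) (hu : ∀ k, u ≠ e k) : ∃ i, G.Adj u (e i) := by
  by_contra hW
  push_neg at hW
  have hadj := BCF.adjIff e
  have na1 : ∀ i : Fin p, i+1 ≠ i := fun i => (BCF.na hp5 i).1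
  have na2 : ∀ i : Fin p, i+1+1 ≠ i := fun i => (BCF.na hp5 i).2.1
  have na3 : ∀ i : Fin p, i+1+1+1 ≠ i := fun i => (BCF.na hp5 i).2.2.1
  have na4 : ∀ i : Fin p, i+1+1+1+1 ≠ i := fun i => (BCF.na hp5 i).2.2.2
  have hprop : ∀ v w : V, ((∀ i, ¬G.Adj v (e i)) ∧ (∀ i, v ≠ e i)) → G.Adj v w →
      ((∀ i, ¬G.Adj w (e i)) ∧ (∀ i, w ≠ e i)) := by
    rintro v w ⟨hv1, hv2⟩ hvw
    by_cases hwA : ∃ k, w = e k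
    · obtain ⟨k, rfl⟩ := hwA
      exact (BCF.claw_of hclaw (e k) v (e (k+1+1)) (e (k+1+1+1))
        hvw.symm
        ((hadj _ _).2 ⟨fun h => na2 k h.symm, fun h => na1 (k+1) h.symm, na3 k⟩)
        ((hadj _ _).2 ⟨fun h => na3 k h.symm, fun h => na2 (k+1) h.symm, na4 k⟩)
        (hv1 _) (hv1 _) (BCF.ncons e (k+1+1))
        (hv2 _) (hv2 _) (fun h => na1 (k+1+1) (e.injective h).symm)).elim
    · have hwA' : ∀ k, w ≠ e k := fun k hk => hwA ⟨k, hk⟩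
      by_cases hwS : ∃ i, G.Adj w (e i)
      · obtain ⟨i0, hi0⟩ := hwS
        by_cases hpair : ∃ s, G.Adj w (e s) ∧ G.Adj w (e (s+1))
        · obtain ⟨s, hs1, hs2⟩ := hpair
          exact (BCF.claw_of hclaw w v (e s) (e (s+1)) hvw.symm hs1 hs2
            (hv1 s) (hv1 (s+1)) (BCF.ncons e s)
            (hv2 s) (hv2 (s+1)) (fun h => na1 s (e.injective h).symm)).elim
        · push_neg at hpair
          exact (BCF.flipFalse hodd (fun j => G.Adj w (e j)) (fun j =>
            ⟨fun h1 h0 => hpair j h0 h1, fun h0 => by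
              by_contra hno
              exact BCF.noMedge hp5 hbull hclaw e w hwA' hi0 h0 hno⟩)).elim
      · push_neg at hwS
        exact ⟨hwS, hwA'⟩
  have hwalk : ∀ v w : V, G.Walk v w → ((∀ i, ¬G.Adj v (e i)) ∧ (∀ i, v ≠ e i)) →
      ((∀ i, ¬G.Adj w (e i)) ∧ (∀ i, w ≠ e i)) := by
    intro v w wk
    induction wk with
    | nil => exact id
    | cons h q ih => intro hv; exact ih (hprop _ _ hv h)
  obtain ⟨wk⟩ := hconn.preconnected u (e 0)
  exact (hwalk u (e 0) wk ⟨hW, hu⟩).2 0 rfl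

lemma BCF.indepM (hp5 : 5 ≤ p) (hodd : Odd p)
    (hbull : ¬ Nonempty (bull ↪g G)) (hclaw : ¬ Nonempty (claw ↪g G))
    (hconn : G.Connected) (e : (cycleG p)ᶜ ↪g G)
    (u : V) (hu : ∀ k, u ≠ e k) :
    ∀ j, ¬ G.Adj u (e j) → G.Adj u (e (j+1)) := by
  intro j hj
  by_contra h
  obtain ⟨i, hi⟩ := BCF.hasNbr hp5 hodd hbull hclaw hconn e u hu
  exact BCF.noMedge hp5 hbull hclaw e u hu hi hj h

lemma BCF.pairCommon (hp5 : 5 ≤ p) (hodd : Odd p)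
    (hbull : ¬ Nonempty (bull ↪g G)) (hclaw : ¬ Nonempty (claw ↪g G))
    (hconn : G.Connected) (e : (cycleG p)ᶜ ↪g G)
    (y z : V) (hy : ∀ k, y ≠ e k) (hz : ∀ k, z ≠ e k) :
    ∃ i, G.Adj y (e i) ∧ G.Adj z (e i) := by
  by_contra hno
  push_neg at hno
  have iy := BCF.indepM hp5 hodd hbull hclaw hconn e y hy
  have iz := BCF.indepM hp5 hodd hbull hclaw hconn e z hz
  refine BCF.flipFalse hodd (fun j => G.Adj y (e j)) (fun j => ⟨?_, iy j⟩)
  intro h1 h0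
  exact hno (j+1) h1 (iz j (hno j h0))

lemma BCF.pairCommonA (hp5 : 5 ≤ p) (hodd : Odd p)
    (hbull : ¬ Nonempty (bull ↪g G)) (hclaw : ¬ Nonempty (claw ↪g G))
    (hconn : G.Connected) (e : (cycleG p)ᶜ ↪g G)
    (k : Fin p) (z : V) (hz : ∀ k, z ≠ e k) :
    ∃ i, G.Adj (e k) (e i) ∧ G.Adj z (e i) := by
  by_contra hno
  push_neg at hno
  have hadj := BCF.adjIff e
  have na1 : ∀ i : Fin p, i+1 ≠ i := fun i => (BCF.na hp5 i).1
  have na2 : ∀ i : Fin p, i+1+1 ≠ i := fun i => (BCF.na hp5 i).2.1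
  have na3 : ∀ i : Fin p, i+1+1+1 ≠ i := fun i => (BCF.na hp5 i).2.2.1
  have na4 : ∀ i : Fin p, i+1+1+1+1 ≠ i := fun i => (BCF.na hp5 i).2.2.2
  have iz := BCF.indepM hp5 hodd hbull hclaw hconn e z hz
  have a2 : G.Adj (e k) (e (k+1+1)) :=
    (hadj _ _).2 ⟨fun h => na2 k h.symm, fun h => na1 (k+1) h.symm, na3 k⟩
  have a3 : G.Adj (e k) (e (k+1+1+1)) :=
    (hadj _ _).2 ⟨fun h => na3 k h.symm, fun h => na2 (k+1) h.symm, na4 k⟩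
  exact hno _ a3 (iz (k+1+1) (hno _ a2))

end BullClawAux3

section BullClawAux4

variable {V : Type*} {G : SimpleGraph V} {p : ℕ} [NeZero p]

lemma BCF.core2 (hp5 : 5 ≤ p) (hodd : Odd p)
    (hbull : ¬ Nonempty (bull ↪g G)) (hclaw : ¬ Nonempty (claw ↪g G))
    (hconn : G.Connected) (e : (cycleG p)ᶜ ↪g G)
    (x y z : V) (hy : ∀ k, y ≠ e k) (hz : ∀ k, z ≠ e k)
    (nxy : ¬G.Adj x y) (nxz : ¬G.Adj x z) (nyz : ¬G.Adj y z)
    (dxy : x ≠ y) (dxz : x ≠ z) (dyz : y ≠ z) : False := by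
  have hadj := BCF.adjIff e
  have na1 : ∀ i : Fin p, i+1 ≠ i := fun i => (BCF.na hp5 i).1
  have na3 : ∀ i : Fin p, i+1+1+1 ≠ i := fun i => (BCF.na hp5 i).2.2.1
  have hF1 : ∀ i, ¬(G.Adj x (e i) ∧ G.Adj y (e i) ∧ G.Adj z (e i)) := by
    rintro i ⟨h1, h2, h3⟩
    exact BCF.claw_of hclaw (e i) x y z h1.symm h2.symm h3.symm nxy nxz nyz dxy dxz dyz
  obtain ⟨α, hyα, hzα⟩ := BCF.pairCommon hp5 hodd hbull hclaw hconn e y z hy hz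
  have hxα : ¬ G.Adj x (e α) := fun h => hF1 α ⟨h, hyα, hzα⟩
  have hβex : ∃ i, G.Adj x (e i) ∧ G.Adj z (e i) := by
    by_cases hxA : ∃ k, x = e k
    · obtain ⟨k, rfl⟩ := hxA
      exact BCF.pairCommonA hp5 hodd hbull hclaw hconn e k z hz
    · exact BCF.pairCommon hp5 hodd hbull hclaw hconn e x z (fun k hk => hxA ⟨k, hk⟩) hz
  obtain ⟨β, hxβ, hzβ⟩ := hβex
  have hyβ : ¬ G.Adj y (e β) := fun h => hF1 β ⟨hxβ, h, hzβ⟩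
  have hγex : ∃ i, G.Adj x (e i) ∧ G.Adj y (e i) := by
    by_cases hxA : ∃ k, x = e k
    · obtain ⟨k, rfl⟩ := hxA
      exact BCF.pairCommonA hp5 hodd hbull hclaw hconn e k y hy
    · exact BCF.pairCommon hp5 hodd hbull hclaw hconn e x y (fun k hk => hxA ⟨k, hk⟩) hy
  obtain ⟨γ, hxγ, hyγ⟩ := hγex
  have hzγ : ¬ G.Adj z (e γ) := fun h => hF1 γ ⟨hxγ, hyγ, h⟩
  have B1 : α + 1 = β ∨ β + 1 = α := by
    by_contra hc
    push_neg at hc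
    obtain ⟨c1, c2⟩ := hc
    have dαβ : α ≠ β := fun h => hxα (h ▸ hxβ)
    exact BCF.bull_of hbull (e α) (e β) z y x
      ((hadj _ _).2 ⟨dαβ, c1, c2⟩) hzα.symm hzβ.symm hyα hxβ
      hyβ nyz hxα nxz (fun h => nxy h.symm)
  have B2 : α + 1 = γ ∨ γ + 1 = α := by
    by_contra hc
    push_neg at hc
    obtain ⟨c1, c2⟩ := hc
    have dαγ : α ≠ γ := fun h => hxα (h ▸ hxγ)
    exact BCF.bull_of hbull (e α) (e γ) y z x
      ((hadj _ _).2 ⟨dαγ, c1, c2⟩) hyα.symm hyγ.symm hzα hxγ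
      hzγ (fun h => nyz h.symm) hxα nxy (fun h => nxz h.symm)
  have B3 : β + 1 = γ ∨ γ + 1 = β := by
    by_contra hc
    push_neg at hc
    obtain ⟨c1, c2⟩ := hc
    have dβγ : β ≠ γ := fun h => hyβ (h ▸ hyγ)
    exact BCF.bull_of hbull (e β) (e γ) x z y
      ((hadj _ _).2 ⟨dβγ, c1, c2⟩) hxβ.symm hxγ.symm hzβ hyγ
      hzγ (fun h => nxz h.symm) hyβ (fun h => nxy h.symm) (fun h => nyz h.symm)
  have dβγ : β ≠ γ := fun h => hyβ (h ▸ hyγ)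
  rcases B1 with b1 | b1 <;> rcases B2 with b2 | b2 <;> rcases B3 with b3 | b3
  · exact dβγ (b1.symm.trans b2)
  · exact dβγ (b1.symm.trans b2)
  · exact na3 γ (by linear_combination b1 + b2 + b3)
  · exact na1 γ (by linear_combination b1 + b2 - b3)
  · exact na1 β (by linear_combination b1 + b2 - b3)
  · exact na3 β (by linear_combination b1 + b2 + b3)
  · exact dβγ (add_right_cancel (b1.trans b2.symm))
  · exact dβγ (add_right_cancel (b1.trans b2.symm))

lemma BCF.innerCase (hp5 : 5 ≤ p) (hodd : Odd p)
    (hbull : ¬ Nonempty (bull ↪g G)) (hclaw : ¬ Nonempty (claw ↪g G))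
    (hconn : G.Connected) (e : (cycleG p)ᶜ ↪g G)
    (t : V) (i : Fin p) (h0 : ¬G.Adj t (e i)) (h1 : ¬G.Adj t (e (i+1)))
    (d0 : t ≠ e i) (d1 : t ≠ e (i+1)) : False := by
  have hadj := BCF.adjIff e
  have na1 : ∀ i : Fin p, i+1 ≠ i := fun i => (BCF.na hp5 i).1
  have na3 : ∀ i : Fin p, i+1+1+1 ≠ i := fun i => (BCF.na hp5 i).2.2.1
  have ht : ∀ k, t ≠ e k := by
    intro m hm
    rw [hm] at h0 h1 d0 d1
    have hmi : m ≠ i := fun h => d0 (congrArg e h)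
    have hmi1 : m ≠ i + 1 := fun h => d1 (congrArg e h)
    have g0 : m + 1 = i ∨ i + 1 = m := by
      by_contra hg
      push_neg at hg
      exact h0 ((hadj _ _).2 ⟨hmi, hg.1, hg.2⟩)
    have g1 : m + 1 = i + 1 ∨ i + 1 + 1 = m := by
      by_contra hg
      push_neg at hg
      exact h1 ((hadj _ _).2 ⟨hmi1, hg.1, hg.2⟩)
    rcases g0 with g0 | g0 <;> rcases g1 with g1 | g1
    · exact na1 i (by linear_combination g0 - g1)
    · exact na3 i (by linear_combination g0 + g1)
    · exact hmi (add_right_cancel g1)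
    · exact na1 (i+1) (by linear_combination g1 - g0)
  obtain ⟨s, hs⟩ := BCF.hasNbr hp5 hodd hbull hclaw hconn e t ht
  exact BCF.noMedge hp5 hbull hclaw e t ht hs h0 h1

lemma BCF.twoA (hp5 : 5 ≤ p) (hodd : Odd p)
    (hbull : ¬ Nonempty (bull ↪g G)) (hclaw : ¬ Nonempty (claw ↪g G))
    (hconn : G.Connected) (e : (cycleG p)ᶜ ↪g G)
    (i j : Fin p) (t : V) (hnadj : ¬ G.Adj (e i) (e j)) (hij : i ≠ j)
    (hti : ¬ G.Adj t (e i)) (htj : ¬ G.Adj t (e j))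
    (dti : t ≠ e i) (dtj : t ≠ e j) : False := by
  have hadj := BCF.adjIff e
  have hcase : i + 1 = j ∨ j + 1 = i := by
    by_contra hg
    push_neg at hg
    exact hnadj ((hadj _ _).2 ⟨hij, hg.1, hg.2⟩)
  rcases hcase with hc | hc
  · subst hc
    exact BCF.innerCase hp5 hodd hbull hclaw hconn e t i hti htj dti dtj
  · subst hc
    exact BCF.innerCase hp5 hodd hbull hclaw hconn e t j htj hti dtj dti

lemma BCF.core (hp5 : 5 ≤ p) (hodd : Odd p)
    (hbull : ¬ Nonempty (bull ↪g G)) (hclaw : ¬ Nonempty (claw ↪g G))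
    (hconn : G.Connected) (e : (cycleG p)ᶜ ↪g G)
    (x y z : V)
    (nxy : ¬G.Adj x y) (nxz : ¬G.Adj x z) (nyz : ¬G.Adj y z)
    (dxy : x ≠ y) (dxz : x ≠ z) (dyz : y ≠ z) : False := by
  by_cases hx : ∃ k, x = e k
  · by_cases hy : ∃ k, y = e k
    · obtain ⟨k1, rfl⟩ := hx
      obtain ⟨k2, rfl⟩ := hy
      exact BCF.twoA hp5 hodd hbull hclaw hconn e k1 k2 z nxy
        (fun h => dxy (congrArg e h))
        (fun h => nxz h.symm) (fun h => nyz h.symm) (Ne.symm dxz) (Ne.symm dyz)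
    · by_cases hz : ∃ k, z = e k
      · obtain ⟨k1, rfl⟩ := hx
        obtain ⟨k3, rfl⟩ := hz
        exact BCF.twoA hp5 hodd hbull hclaw hconn e k1 k3 y nxz
          (fun h => dxz (congrArg e h))
          (fun h => nxy h.symm) nyz (Ne.symm dxy) dyz
      · exact BCF.core2 hp5 hodd hbull hclaw hconn e x y z
          (fun k hk => hy ⟨k, hk⟩) (fun k hk => hz ⟨k, hk⟩)
          nxy nxz nyz dxy dxz dyz
  · by_cases hy : ∃ k, y = e k
    · by_cases hz : ∃ k, z = e k
      · obtain ⟨k2, rfl⟩ := hy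
        obtain ⟨k3, rfl⟩ := hz
        exact BCF.twoA hp5 hodd hbull hclaw hconn e k2 k3 x nyz
          (fun h => dyz (congrArg e h))
          nxy nxz dxy dxz
      · exact BCF.core2 hp5 hodd hbull hclaw hconn e y x z
          (fun k hk => hx ⟨k, hk⟩) (fun k hk => hz ⟨k, hk⟩)
          (fun h => nxy h.symm) nyz nxz (Ne.symm dxy) dyz dxz
    · by_cases hz : ∃ k, z = e k
      · exact BCF.core2 hp5 hodd hbull hclaw hconn e z x y
          (fun k hk => hx ⟨k, hk⟩) (fun k hk => hy ⟨k, hk⟩)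
          (fun h => nxz h.symm) (fun h => nyz h.symm) nxy
          (Ne.symm dxz) (Ne.symm dyz) dxy
      · exact BCF.core2 hp5 hodd hbull hclaw hconn e x y z
          (fun k hk => hy ⟨k, hk⟩) (fun k hk => hz ⟨k, hk⟩)
          nxy nxz nyz dxy dxz dyz

end BullClawAux4


theorem bull_claw_free_oddAntihole_indepNum {V : Type*} [Fintype V] (G : SimpleGraph V)
    (hconn : G.Connected)
    (hbull : ¬ Nonempty (bull ↪g G)) (hclaw : ¬ Nonempty (claw ↪g G))
    (hanti : ∃ p : ℕ, ∃ _ : NeZero p, Odd p ∧ 5 ≤ p ∧ Nonempty ((cycleG p)ᶜ ↪g G)) :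
    _root_.indepNum G = 2 := by
  classical
  obtain ⟨p, hNZ, hodd, hp5, ⟨e⟩⟩ := hanti
  haveI := hNZ
  have h01 : (0 : Fin p) ≠ 1 := by
    intro h
    have h' := congrArg Fin.val h
    rw [Fin.val_one', Nat.mod_eq_of_lt (by omega), Fin.val_zero] at h'
    exact absurd h' (by norm_num)
  have hne : e 0 ≠ e 1 := fun h => h01 (e.injective h)
  have hnadj01 : ¬ G.Adj (e 0) (e 1) := by simpa using BCF.ncons e 0
  have h2 : 2 ∈ {n | ∃ s : Finset V, s.card = n ∧ ∀ a ∈ s, ∀ b ∈ s, a ≠ b → ¬ G.Adj a b} := by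
    refine ⟨{e 0, e 1}, ?_, ?_⟩
    · rw [Finset.card_insert_of_notMem (by simp [hne]), Finset.card_singleton]
    · intro a ha b hb hab
      simp only [Finset.mem_insert, Finset.mem_singleton] at ha hb
      rcases ha with rfl | rfl <;> rcases hb with rfl | rfl
      · exact absurd rfl hab
      · exact hnadj01
      · exact fun h => hnadj01 h.symm
      · exact absurd rfl hab
  have hub : ∀ n ∈ {n | ∃ s : Finset V, s.card = n ∧ ∀ a ∈ s, ∀ b ∈ s, a ≠ b → ¬ G.Adj a b},
      n ≤ 2 := by
    rintro n ⟨s, hcard, hind⟩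
    by_contra hn
    push_neg at hn
    have h3 : 3 ≤ s.card := by omega
    obtain ⟨t, hts, hcard3⟩ := Finset.exists_subset_card_eq h3
    rw [Finset.card_eq_three] at hcard3
    obtain ⟨x, y, z, dxy, dxz, dyz, ht3⟩ := hcard3
    have hx : x ∈ s := hts (by rw [ht3]; simp)
    have hy : y ∈ s := hts (by rw [ht3]; simp)
    have hz : z ∈ s := hts (by rw [ht3]; simp)
    exact BCF.core hp5 hodd hbull hclaw hconn e x y z
      (hind x hx y hy dxy) (hind x hx z hz dxz) (hind y hy z hz dyz) dxy dxz dyz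
  unfold _root_.indepNum
  exact le_antisymm (csSup_le ⟨2, h2⟩ hub) (le_csSup ⟨2, fun n hn => hub n hn⟩ h2)
end

section
/- Let G be a (bull, chair)-free graph containing an induced odd antihole with vertices v_1, …, v_p (p odd, p ≥ 5), where v_i and v_j are adjacent in G if and only if j ≢ i ± 1 (mod p). If a vertex w ∉ {v_1,…,v_p} is adjacent to at least one vertex of the antihole, then there is no index i such that both v_i and v_{i+1} (indices modulo p) are non-adjacent to w. -/
open SimpleGraph Finset

lemma bull_embed {V : Type*} {G : SimpleGraph V} {x y z u t : V}
    (exy : G.Adj x y) (eyz : G.Adj y z) (ezu : G.Adj z u) (eut : G.Adj u t) (eyu : G.Adj y u)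
    (nxz : ¬ G.Adj x z) (nxu : ¬ G.Adj x u) (nxt : ¬ G.Adj x t)
    (nyt : ¬ G.Adj y t) (nzt : ¬ G.Adj z t)
    (dxz : x ≠ z) (dxu : x ≠ u) (dxt : x ≠ t) (dyt : y ≠ t) (dzt : z ≠ t) :
    Nonempty (bull ↪g G) := by
  have dxy := exy.ne; have dyz := eyz.ne; have dzu := ezu.ne; have dut := eut.ne
  have dyu := eyu.ne
  have eyx := exy.symm; have ezy := eyz.symm; have euz := ezu.symm; have etu := eut.symm
  have euy := eyu.symm
  have nzx : ¬ G.Adj z x := fun h => nxz h.symm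
  have nux : ¬ G.Adj u x := fun h => nxu h.symm
  have ntx : ¬ G.Adj t x := fun h => nxt h.symm
  have nty : ¬ G.Adj t y := fun h => nyt h.symm
  have ntz : ¬ G.Adj t z := fun h => nzt h.symm
  refine ⟨⟨⟨![x,y,z,u,t], ?_⟩, ?_⟩⟩
  · intro a b h
    fin_cases a <;> fin_cases b <;> simp_all
  · intro a b
    change G.Adj (![x,y,z,u,t] a) (![x,y,z,u,t] b) ↔ bull.Adj a b
    fin_cases a <;> fin_cases b <;>
      simp_all [bull, SimpleGraph.fromRel_adj] <;> decide

lemma chair_embed {V : Type*} {G : SimpleGraph V} {a b c d e : V}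
    (eab : G.Adj a b) (eac : G.Adj a c) (ead : G.Adj a d) (ede : G.Adj d e)
    (nbc : ¬ G.Adj b c) (nbd : ¬ G.Adj b d) (nbe : ¬ G.Adj b e)
    (ncd : ¬ G.Adj c d) (nce : ¬ G.Adj c e) (nae : ¬ G.Adj a e)
    (dbc : b ≠ c) (dbd : b ≠ d) (dbe : b ≠ e) (dcd : c ≠ d) (dce : c ≠ e) (dae : a ≠ e) :
    Nonempty (chair ↪g G) := by
  have dab := eab.ne; have dac := eac.ne; have dad := ead.ne; have dde := ede.ne
  have eba := eab.symm; have eca := eac.symm; have eda := ead.symm; have eed := ede.symm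
  have ncb : ¬ G.Adj c b := fun h => nbc h.symm
  have ndb : ¬ G.Adj d b := fun h => nbd h.symm
  have neb : ¬ G.Adj e b := fun h => nbe h.symm
  have ndc : ¬ G.Adj d c := fun h => ncd h.symm
  have nec : ¬ G.Adj e c := fun h => nce h.symm
  have nea : ¬ G.Adj e a := fun h => nae h.symm
  refine ⟨⟨⟨![a,b,c,d,e], ?_⟩, ?_⟩⟩
  · intro i j h
    fin_cases i <;> fin_cases j <;> simp_all
  · intro i j
    change G.Adj (![a,b,c,d,e] i) (![a,b,c,d,e] j) ↔ chair.Adj i j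
    fin_cases i <;> fin_cases j <;>
      simp_all [chair, SimpleGraph.fromRel_adj] <;> decide

open Fin.NatCast Fin.CommRing in
theorem no_two_consecutive_nonneighbors {V : Type*} (G : SimpleGraph V)
    (hbull : ¬ Nonempty (bull ↪g G)) (hchair : ¬ Nonempty (chair ↪g G))
    (p : ℕ) [NeZero p] (hodd : Odd p) (hp : 5 ≤ p)
    (v : Fin p → V) (hvinj : Function.Injective v)
    (hv : ∀ i j : Fin p, G.Adj (v i) (v j) ↔ ((cycleG p)ᶜ).Adj i j)
    (w : V) (hw : ∀ i, w ≠ v i) (hadj : ∃ i, G.Adj w (v i)) :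
    ¬ ∃ i : Fin p, ¬ G.Adj w (v i) ∧ ¬ G.Adj w (v (i + 1)) := by
  classical
  rintro ⟨i, hi0, hi1⟩
  -- small numerals in `Fin p` behave like naturals
  have hcne : ∀ m n : ℕ, m < p → n < p → m ≠ n → ((m : ℕ) : Fin p) ≠ ((n : ℕ) : Fin p) := by
    intro m n hm hn hmn h
    apply hmn
    rw [← Fin.val_cast_of_lt (n := p) hm, ← Fin.val_cast_of_lt (n := p) hn, h]
  have h10 : (1 : Fin p) ≠ 0 := by
    have := hcne 1 0 (by omega) (by omega) (by omega); simpa using this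
  have h20 : (2 : Fin p) ≠ 0 := by
    have := hcne 2 0 (by omega) (by omega) (by omega); simpa using this
  have h30 : (3 : Fin p) ≠ 0 := by
    have := hcne 3 0 (by omega) (by omega) (by omega); simpa using this
  have h40 : (4 : Fin p) ≠ 0 := by
    have := hcne 4 0 (by omega) (by omega) (by omega); simpa using this
  have h21 : (2 : Fin p) ≠ 1 := by
    have := hcne 2 1 (by omega) (by omega) (by omega); simpa using this
  have h31 : (3 : Fin p) ≠ 1 := by
    have := hcne 3 1 (by omega) (by omega) (by omega); simpa using this
  -- adjacency in the antihole at distance `d`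
  have adjd : ∀ a d : Fin p, d ≠ 0 → d ≠ 1 → d + 1 ≠ 0 → G.Adj (v a) (v (a + d)) := by
    intro a d h0 h1 h2
    rw [hv, SimpleGraph.compl_adj]
    refine ⟨?_, ?_⟩
    · intro h
      exact h0 ((add_left_cancel (show a + 0 = a + d by rw [add_zero]; exact h)).symm)
    · rintro ⟨-, h | h⟩
      · exact h1 ((add_left_cancel (show a + 1 = a + d from h)).symm)
      · exact h2 (add_left_cancel (show a + (d + 1) = a + 0 by
          rw [add_zero, ← add_assoc]; exact h))
  -- consecutive vertices of the antihole are nonadjacent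
  have nadj : ∀ a : Fin p, ¬ G.Adj (v a) (v (a + 1)) := by
    intro a h
    rw [hv, SimpleGraph.compl_adj] at h
    exact h.2 ⟨h.1, Or.inl rfl⟩
  have idxne : ∀ (a c : Fin p), c ≠ 0 → a ≠ a + c := by
    intro a c h0 h
    exact h0 ((add_left_cancel (show a + 0 = a + c by rw [add_zero]; exact h)).symm)
  have vne : ∀ a b : Fin p, a ≠ b → v a ≠ v b := fun a b h hh => h (hvinj hh)
  -- find the last neighbor of `w` before the run of nonneighbors
  have hex : ∃ k : ℕ, 0 < k ∧ G.Adj w (v (i - (k : ℕ))) := by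
    obtain ⟨m, hm⟩ := hadj
    refine ⟨(i - m).val, ?_, ?_⟩
    · refine Nat.pos_of_ne_zero fun h => ?_
      have : i - m = 0 := Fin.ext (by simp [h])
      have : m = i := by
        have h' := sub_eq_zero.mp this
        exact h'.symm
      rw [this] at hm; exact hi0 hm
    · rw [Fin.cast_val_eq_self, sub_sub_cancel]; exact hm
  set K : ℕ := Nat.find hex with hKdef
  have hK1 : 0 < K := (Nat.find_spec hex).1
  have hKadj : G.Adj w (v (i - (K : ℕ))) := (Nat.find_spec hex).2
  set j : Fin p := i - ((K : ℕ) : Fin p) with hjdef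
  have hj1 : ¬ G.Adj w (v (j + 1)) := by
    have cast1 : ((K : ℕ) : Fin p) = ((K - 1 : ℕ) : Fin p) + 1 := by
      conv_lhs => rw [show K = (K - 1) + 1 by omega]
      push_cast
      ring
    have ej1 : j + 1 = i - ((K - 1 : ℕ) : Fin p) := by rw [hjdef, cast1]; ring
    rw [ej1]
    rcases Nat.lt_or_ge K 2 with h2 | h2
    · have : (K - 1 : ℕ) = 0 := by omega
      rw [this]; simpa using hi0
    · intro hA
      exact Nat.find_min hex (by omega : K - 1 < K) ⟨by omega, hA⟩
  have hj2 : ¬ G.Adj w (v (j + 2)) := by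
    rcases Nat.lt_or_ge K 2 with h2 | h2
    · have hK : K = 1 := by omega
      have : j + 2 = i + 1 := by rw [hjdef, hK]; push_cast; ring
      rw [this]; exact hi1
    · have cast2 : ((K : ℕ) : Fin p) = ((K - 2 : ℕ) : Fin p) + 2 := by
        conv_lhs => rw [show K = (K - 2) + 2 by omega]
        push_cast
        ring
      have e2 : j + 2 = i - ((K - 2 : ℕ) : Fin p) := by rw [hjdef, cast2]; ring
      rw [e2]
      rcases Nat.lt_or_ge K 3 with h3 | h3
      · have : (K - 2 : ℕ) = 0 := by omega
        rw [this]; simpa using hi0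
      · intro hA
        exact Nat.find_min hex (by omega : K - 2 < K) ⟨by omega, hA⟩
  have hwj : G.Adj w (v j) := hKadj
  -- index identities
  have e12 : j + 1 + 2 = j + 3 := by ring
  have e11 : j + 1 + 1 = j + 2 := by ring
  have e21 : j + 2 + 1 = j + 3 := by ring
  -- antihole adjacency facts
  have a02 : G.Adj (v j) (v (j + 2)) := adjd j 2 h20 h21 (by
    intro h; exact h30 (by rw [show (3 : Fin p) = 2 + 1 by ring]; exact h))
  have a03 : G.Adj (v j) (v (j + 3)) := adjd j 3 h30 h31 (by
    intro h; exact h40 (by rw [show (4 : Fin p) = 3 + 1 by ring]; exact h))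
  have a13 : G.Adj (v (j + 1)) (v (j + 3)) := by
    have := adjd (j + 1) 2 h20 h21 (by
      intro h; exact h30 (by rw [show (3 : Fin p) = 2 + 1 by ring]; exact h))
    rwa [e12] at this
  have n01 : ¬ G.Adj (v j) (v (j + 1)) := nadj j
  have n12 : ¬ G.Adj (v (j + 1)) (v (j + 2)) := by have := nadj (j + 1); rwa [e11] at this
  have n23 : ¬ G.Adj (v (j + 2)) (v (j + 3)) := by have := nadj (j + 2); rwa [e21] at this
  -- distinctness of indices
  have d01 : j ≠ j + 1 := idxne j 1 h10
  have d02 : j ≠ j + 2 := idxne j 2 h20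
  have d03 : j ≠ j + 3 := idxne j 3 h30
  have d12 : j + 1 ≠ j + 2 := by have := idxne (j + 1) 1 h10; rwa [e11] at this
  have d13 : j + 1 ≠ j + 3 := by have := idxne (j + 1) 2 h20; rwa [e12] at this
  have d23 : j + 2 ≠ j + 3 := by have := idxne (j + 2) 1 h10; rwa [e21] at this
  by_cases hj3 : G.Adj w (v (j + 3))
  · -- bull on  v(j+2), v j, w, v(j+3), v(j+1)
    exact hbull (bull_embed (x := v (j + 2)) (y := v j) (z := w) (u := v (j + 3))
      (t := v (j + 1))
      a02.symm hwj.symm hj3 a13.symm a03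
      (fun h => hj2 h.symm) n23 (fun h => n12 h.symm)
      n01 hj1
      (fun h => hw (j + 2) h.symm) (vne _ _ (fun h => d23 h)) (vne _ _ (fun h => d12 h.symm))
      (vne _ _ d01) (hw (j + 1)))
  · -- chair with center v j, leaves w and v(j+2), path v j - v(j+3) - v(j+1)
    exact hchair (chair_embed (a := v j) (b := w) (c := v (j + 2)) (d := v (j + 3))
      (e := v (j + 1))
      hwj.symm a02 a03 a13.symm
      hj2 hj3 hj1 n23 (fun h => n12 h.symm) n01
      (hw (j + 2)) (hw (j + 3)) (hw (j + 1)) (vne _ _ d23) (vne _ _ (fun h => d12 h.symm))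
      (vne _ _ d01))
end

section
/- Let G be a (bull, claw, C_5)-free graph containing an induced odd antihole Q̄ isomorphic to C̄_7 with vertices v_1, …, v_7 (so v_i and v_j are adjacent in G if and only if j ≢ i ± 1 (mod 7)). If a vertex w ∉ Q̄ has exactly 5 neighbors in Q̄, then there exists an index i such that both v_i and v_{i+2} (indices modulo 7) are non-adjacent to w. -/
open SimpleGraph Finset

instance (p : ℕ) [NeZero p] : DecidableRel (cycleG p).Adj :=
  fun i j => inferInstanceAs (Decidable (i ≠ j ∧ (i + 1 = j ∨ j + 1 = i)))

instance : DecidableRel bull.Adj :=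
  fun a b => inferInstanceAs (Decidable (a ≠ b ∧ _))

lemma bull_of_dist1 {V : Type*} (G : SimpleGraph V)
    (v : Fin 7 → V) (hvinj : Function.Injective v)
    (hv : ∀ i j : Fin 7, G.Adj (v i) (v j) ↔ ((cycleG 7)ᶜ).Adj i j)
    (w : V) (hw : ∀ i, w ≠ v i)
    (h0 : ¬ G.Adj w (v 0)) (h1 : ¬ G.Adj w (v 1))
    (h2 : G.Adj w (v 2)) (h6 : G.Adj w (v 6)) :
    Nonempty (bull ↪g G) := by
  have hne : ∀ i j : Fin 7, i ≠ j → v i ≠ v j := fun i j h e => h (hvinj e)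
  refine ⟨⟨⟨![v 0, v 2, w, v 6, v 1], ?_⟩, ?_⟩⟩
  · intro x y h
    fin_cases x <;> fin_cases y <;> simp_all <;>
      first
        | rfl
        | exact absurd h (hne _ _ (by decide))
        | exact absurd h.symm (hne _ _ (by decide))
        | exact absurd h (hw _)
        | exact absurd h.symm (hw _)
  · intro x y
    show G.Adj (![v 0, v 2, w, v 6, v 1] x) (![v 0, v 2, w, v 6, v 1] y) ↔ _
    fin_cases x <;> fin_cases y <;> simp [bull, hv] <;>
      first
        | decide
        | exact h2 | exact h2.symm | exact h6 | exact h6.symm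
        | exact h0 | exact fun h => h0 h.symm
        | exact h1 | exact fun h => h1 h.symm

lemma c5_of_dist3 {V : Type*} (G : SimpleGraph V)
    (v : Fin 7 → V) (hvinj : Function.Injective v)
    (hv : ∀ i j : Fin 7, G.Adj (v i) (v j) ↔ ((cycleG 7)ᶜ).Adj i j)
    (w : V) (hw : ∀ i, w ≠ v i)
    (h0 : ¬ G.Adj w (v 0)) (h3 : ¬ G.Adj w (v 3))
    (h1 : G.Adj w (v 1)) (h2 : G.Adj w (v 2)) :
    Nonempty (cycleG 5 ↪g G) := by
  have hne : ∀ i j : Fin 7, i ≠ j → v i ≠ v j := fun i j h e => h (hvinj e)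
  refine ⟨⟨⟨![w, v 2, v 0, v 3, v 1], ?_⟩, ?_⟩⟩
  · intro x y h
    fin_cases x <;> fin_cases y <;> simp_all <;>
      first
        | rfl
        | exact absurd h (hne _ _ (by decide))
        | exact absurd h.symm (hne _ _ (by decide))
        | exact absurd h (hw _)
        | exact absurd h.symm (hw _)
  · intro x y
    show G.Adj (![w, v 2, v 0, v 3, v 1] x) (![w, v 2, v 0, v 3, v 1] y) ↔ _
    fin_cases x <;> fin_cases y <;> simp [cycleG, hv] <;>
      first
        | decide
        | exact h1 | exact h1.symm | exact h2 | exact h2.symm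
        | exact h0 | exact fun h => h0 h.symm
        | exact h3 | exact fun h => h3 h.symm

lemma shift_adj : ∀ a i j : Fin 7,
    ((cycleG 7)ᶜ).Adj (a + i) (a + j) ↔ ((cycleG 7)ᶜ).Adj i j := by decide

theorem five_neighbors_on_C7bar {V : Type*} (G : SimpleGraph V)
    (hbull : ¬ Nonempty (bull ↪g G)) (hclaw : ¬ Nonempty (claw ↪g G))
    (hC5 : ¬ Nonempty (cycleG 5 ↪g G))
    (v : Fin 7 → V) (hvinj : Function.Injective v)
    (hv : ∀ i j : Fin 7, G.Adj (v i) (v j) ↔ ((cycleG 7)ᶜ).Adj i j)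
    (w : V) (hw : ∀ i, w ≠ v i)
    (hdeg : {i : Fin 7 | G.Adj w (v i)}.ncard = 5) :
    ∃ i : Fin 7, ¬ G.Adj w (v i) ∧ ¬ G.Adj w (v (i + 2)) := by
  classical
  set s : Finset (Fin 7) := Finset.univ.filter (fun i => G.Adj w (v i)) with hs
  have hset : {i : Fin 7 | G.Adj w (v i)} = ↑s := by ext i; simp [hs]
  rw [hset, Set.ncard_coe_finset] at hdeg
  have hcompl : sᶜ.card = 2 := by
    rw [Finset.card_compl, hdeg]; rfl
  obtain ⟨a, b, hab, habs⟩ := Finset.card_eq_two.mp hcompl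
  have hmem : ∀ i : Fin 7, ¬ G.Adj w (v i) ↔ (i = a ∨ i = b) := by
    intro i
    have h1 : i ∈ sᶜ ↔ (i = a ∨ i = b) := by rw [habs]; simp
    simpa [hs] using h1
  have hna : ¬ G.Adj w (v a) := (hmem a).mpr (Or.inl rfl)
  have hnb : ¬ G.Adj w (v b) := (hmem b).mpr (Or.inr rfl)
  have hadj : ∀ i : Fin 7, i ≠ a → i ≠ b → G.Adj w (v i) := by
    intro i hia hib
    by_contra h
    rcases (hmem i).mp h with h' | h' <;> [exact hia h'; exact hib h']
  -- shifted family
  have mkShift : ∀ c : Fin 7,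
      (Function.Injective (fun k : Fin 7 => v (c + k))) ∧
      (∀ i j : Fin 7, G.Adj (v (c + i)) (v (c + j)) ↔ ((cycleG 7)ᶜ).Adj i j) := by
    intro c
    constructor
    · intro i j h
      exact add_left_cancel (hvinj h)
    · intro i j
      exact (hv _ _).trans (shift_adj c i j)
  have harith : ∀ a b : Fin 7, a ≠ b →
      b = a + 2 ∨ a = b + 2 ∨ b = a + 1 ∨ a = b + 1 ∨ b = a + 3 ∨ a = b + 3 := by decide
  have key : ∀ x : Fin 7,
      x + 2 ≠ x ∧ x + 6 ≠ x ∧ x + 2 ≠ x + 1 ∧ x + 6 ≠ x + 1 ∧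
      x + 1 ≠ x ∧ x + 2 ≠ x + 3 ∧ x + 1 ≠ x + 3 := by decide
  rcases harith a b hab with h | h | h | h | h | h
  · exact ⟨a, hna, h ▸ hnb⟩
  · exact ⟨b, hnb, h ▸ hna⟩
  · -- b = a + 1 : bull
    exfalso; apply hbull
    obtain ⟨hui, hua⟩ := mkShift a
    refine bull_of_dist1 G (fun k => v (a + k)) hui hua w (fun i => hw _) ?_ ?_ ?_ ?_
    · simpa using hna
    · show ¬ G.Adj w (v (a + 1)); rw [← h]; exact hnb
    · exact hadj _ (key a).1 (h ▸ (key a).2.2.1)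
    · exact hadj _ (key a).2.1 (h ▸ (key a).2.2.2.1)
  · -- a = b + 1 : bull with base b
    exfalso; apply hbull
    obtain ⟨hui, hua⟩ := mkShift b
    refine bull_of_dist1 G (fun k => v (b + k)) hui hua w (fun i => hw _) ?_ ?_ ?_ ?_
    · simpa using hnb
    · show ¬ G.Adj w (v (b + 1)); rw [← h]; exact hna
    · exact hadj _ (h ▸ (key b).2.2.1) (key b).1
    · exact hadj _ (h ▸ (key b).2.2.2.1) (key b).2.1
  · -- b = a + 3 : C5
    exfalso; apply hC5
    obtain ⟨hui, hua⟩ := mkShift a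
    refine c5_of_dist3 G (fun k => v (a + k)) hui hua w (fun i => hw _) ?_ ?_ ?_ ?_
    · simpa using hna
    · show ¬ G.Adj w (v (a + 3)); rw [← h]; exact hnb
    · exact hadj _ (key a).2.2.2.2.1 (h ▸ (key a).2.2.2.2.2.2)
    · exact hadj _ (key a).1 (h ▸ (key a).2.2.2.2.2.1)
  · -- a = b + 3 : C5 with base b
    exfalso; apply hC5
    obtain ⟨hui, hua⟩ := mkShift b
    refine c5_of_dist3 G (fun k => v (b + k)) hui hua w (fun i => hw _) ?_ ?_ ?_ ?_
    · simpa using hnb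
    · show ¬ G.Adj w (v (b + 3)); rw [← h]; exact hna
    · exact hadj _ (h ▸ (key b).2.2.2.2.2.2) (key b).2.2.2.2.1
    · exact hadj _ (h ▸ (key b).2.2.2.2.2.1) (key b).1
end
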